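/- Let X̃ᵢ = aUXᵢ + b for i = 1,…,n, where U is a unitary operator on H, a ≠ 0 is a real scalar, and b ∈ H, and let Ĉ and C̃ be the trimmed covariance operators of the original and transformed samples. Then for any φ ∈ H and λ ∈ ℝ, φ is an eigenvector of Ĉ with eigenvalue λ if and only if Uφ is an eigenvector of C̃ with eigenvalue a²λ. In particular the ordered eigenvalues satisfy λ̃ₖ = a²λ̂ₖ and corresponding eigenfunctions satisfy φ̃ₖ = Uφ̂ₖ. -/

import Mathlib

open scoped BigOperators RealInnerProductSpace

/-- The `k`-th smallest value (order statistic) of `f : Fin n → ℝ`. -/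
noncomputable def kthSmallest {n : ℕ} (f : Fin n → ℝ) (k : ℕ) : ℝ :=
  sInf {t : ℝ | k ≤ (Finset.univ.filter fun j => f j ≤ t).card}

/-- The α-radius `rᵢ`: the `⌈αn⌉`-th smallest interdistance `‖Xᵢ − Xⱼ‖`, `j = 1,…,n`. -/
noncomputable def sampleRadius {H : Type*} [NormedAddCommGroup H] {n : ℕ}
    (α : ℝ) (X : Fin n → H) (i : Fin n) : ℝ :=
  kthSmallest (fun j => ‖X i - X j‖) ⌈α * n⌉₊

/-- `rank(rᵢ) = #{j : rⱼ < rᵢ} + #{j ≤ i : rⱼ = rᵢ}`. -/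
noncomputable def sampleRank {n : ℕ} (r : Fin n → ℝ) (i : Fin n) : ℕ :=
  (Finset.univ.filter fun j => r j < r i).card +
  (Finset.univ.filter fun j => j ≤ i ∧ r j = r i).card

/-- The weight `w(Xᵢ) = g(rank(rᵢ)/n)`. -/
noncomputable def sampleWeight {H : Type*} [NormedAddCommGroup H] {n : ℕ}
    (g : ℝ → ℝ) (α : ℝ) (X : Fin n → H) (i : Fin n) : ℝ :=
  g ((sampleRank (sampleRadius α X) i : ℝ) / n)

/-- The trimmed mean `μ̂ = Σᵢ w(Xᵢ)Xᵢ / Σᵢ w(Xᵢ)`. -/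
noncomputable def trimmedMean {H : Type*} [NormedAddCommGroup H] [InnerProductSpace ℝ H]
    {n : ℕ} (g : ℝ → ℝ) (α : ℝ) (X : Fin n → H) : H :=
  (∑ i, sampleWeight g α X i)⁻¹ • ∑ i, sampleWeight g α X i • X i

/-- The trimmed covariance operator
`Ĉ(h) = Σᵢ w(Xᵢ)⟨Xᵢ − μ̂, h⟩(Xᵢ − μ̂) / Σᵢ w(Xᵢ)`, as a continuous linear map. -/
noncomputable def trimmedCov {H : Type*} [NormedAddCommGroup H] [InnerProductSpace ℝ H]
    [CompleteSpace H] {n : ℕ} (g : ℝ → ℝ) (α : ℝ) (X : Fin n → H) : H →L[ℝ] H :=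
  (∑ i, sampleWeight g α X i)⁻¹ •
    ∑ i, sampleWeight g α X i •
      ((innerSL ℝ (X i - trimmedMean g α X)).smulRight (X i - trimmedMean g α X))

section aux
open scoped Pointwise

lemma kthSmallest_smul' {n : ℕ} (f : Fin n → ℝ) (k : ℕ) {c : ℝ} (hc : 0 < c) :
    sInf {t : ℝ | k ≤ (Finset.univ.filter fun j => c * f j ≤ t).card} =
      c * sInf {t : ℝ | k ≤ (Finset.univ.filter fun j => f j ≤ t).card} := by
  have hset : {t : ℝ | k ≤ (Finset.univ.filter fun j => c * f j ≤ t).card} =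
      c • {t : ℝ | k ≤ (Finset.univ.filter fun j => f j ≤ t).card} := by
    ext t
    constructor
    · intro ht
      refine ⟨t / c, ?_, by simp only [smul_eq_mul]; field_simp⟩
      simpa [div_le_div_iff_of_pos_right hc, le_div_iff₀ hc, mul_comm] using ht
    · rintro ⟨s, hs, rfl⟩
      simpa [smul_eq_mul, mul_le_mul_iff_right₀ hc] using hs
  rw [hset, Real.sInf_smul_of_nonneg hc.le, smul_eq_mul]

end aux

/-- If `X̃ᵢ = a • U Xᵢ + b` with `U` unitary, `a ≠ 0`, `b ∈ H`, then for any
`φ ∈ H` and `λ ∈ ℝ`, `φ` is an eigenvector of `Ĉ` with eigenvalue `λ` iff `Uφ` is an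
eigenvector of `C̃` with eigenvalue `a²λ`. -/
theorem trimmedCov_eigen_equivariance
    {H : Type*} [NormedAddCommGroup H] [InnerProductSpace ℝ H] [CompleteSpace H]
    [SecondCountableTopology H]
    {n : ℕ} (X : Fin n → H) (α β : ℝ)
    (hα : 0 < α) (hα' : α ≤ 1 / 2) (hβ : 0 ≤ β) (hβ' : β ≤ 1 / 2)
    (g : ℝ → ℝ)
    (hg_nonneg : ∀ t ∈ Set.Icc (0 : ℝ) 1, 0 ≤ g t)
    (hg_bdd : BddAbove (g '' Set.Icc (0 : ℝ) 1))
    (hg_mono : AntitoneOn g (Set.Icc (0 : ℝ) 1))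
    (hg_pos : ∀ t ∈ Set.Icc (0 : ℝ) 1, t < 1 - β → 0 < g t)
    (hg_zero : ∀ t ∈ Set.Icc (0 : ℝ) 1, 1 - β ≤ t → g t = 0)
    (hw_pos : 0 < ∑ i, sampleWeight g α X i)
    (U : H ≃ₗᵢ[ℝ] H) (a : ℝ) (ha : a ≠ 0) (b : H)
    (Xt : Fin n → H) (hXt : ∀ i, Xt i = a • U (X i) + b) :
    ∀ (φ : H) (lam : ℝ),
      (φ ≠ 0 ∧ trimmedCov g α X φ = lam • φ) ↔
      (U φ ≠ 0 ∧ trimmedCov g α Xt (U φ) = (a ^ 2 * lam) • U φ) := by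
  have hc : (0:ℝ) < |a| := abs_pos.2 ha
  -- radius scaling
  have hrad : ∀ i, sampleRadius α Xt i = |a| * sampleRadius α X i := by
    intro i
    have hdist : ∀ j, ‖Xt i - Xt j‖ = |a| * ‖X i - X j‖ := by
      intro j
      rw [hXt, hXt]
      have : a • U (X i) + b - (a • U (X j) + b) = a • U (X i - X j) := by
        simp [map_sub, smul_sub]
      rw [this, norm_smul, Real.norm_eq_abs, U.norm_map]
    unfold sampleRadius kthSmallest
    simp only [hdist]
    exact kthSmallest_smul' (fun j => ‖X i - X j‖) _ hc
  -- rank invariance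
  have hrank : ∀ i, sampleRank (sampleRadius α Xt) i = sampleRank (sampleRadius α X) i := by
    intro i
    unfold sampleRank
    congr 1
    · congr 1; apply Finset.filter_congr; intro j _
      simp [hrad, mul_lt_mul_iff_right₀ hc]
    · congr 1; apply Finset.filter_congr; intro j _
      simp [hrad, mul_right_inj' (ne_of_gt hc)]
  have hw : ∀ i, sampleWeight g α Xt i = sampleWeight g α X i := by
    intro i; unfold sampleWeight; rw [hrank]
  set W := ∑ i, sampleWeight g α X i with hW
  have hWt : ∑ i, sampleWeight g α Xt i = W := by
    simp [hw, hW]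
  have hmean : trimmedMean g α Xt = a • U (trimmedMean g α X) + b := by
    unfold trimmedMean
    rw [hWt]
    simp only [hw, hXt]
    rw [show ∑ i, sampleWeight g α X i • (a • U (X i) + b)
        = a • U (∑ i, sampleWeight g α X i • X i) + W • b by
      simp [Finset.sum_add_distrib, smul_add, map_sum, map_smul, Finset.smul_sum,
        smul_comm a, ← Finset.sum_smul, hW]]
    rw [← hW, map_smul, smul_add, smul_smul, smul_smul, smul_smul,
      inv_mul_cancel₀ (ne_of_gt hw_pos), one_smul, mul_comm]
  have hcenter : ∀ i, Xt i - trimmedMean g α Xt = a • U (X i - trimmedMean g α X) := by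
    intro i
    rw [hmean, hXt, map_sub, smul_sub]
    abel
  have hcov : ∀ φ, trimmedCov g α Xt (U φ) = (a^2) • U (trimmedCov g α X φ) := by
    intro φ
    unfold trimmedCov
    rw [hWt]
    simp only [hw, ContinuousLinearMap.smul_apply, ContinuousLinearMap.sum_apply,
      ContinuousLinearMap.smulRight_apply, innerSL_apply_apply, hcenter]
    simp only [map_smul, map_sum]
    rw [smul_comm (a^2)]
    congr 1
    rw [Finset.smul_sum]
    apply Finset.sum_congr rfl
    intro i _
    rw [real_inner_smul_left, LinearIsometryEquiv.inner_map_map]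
    rw [smul_smul, smul_smul, smul_smul, smul_smul]
    congr 1
    ring
  intro φ lam
  constructor
  · rintro ⟨hφ, hEig⟩
    refine ⟨by simpa using hφ, ?_⟩
    rw [hcov φ, hEig, map_smul, smul_smul]
  · rintro ⟨hφ, hEig⟩
    have hφ' : φ ≠ 0 := fun h => hφ (by simp [h])
    refine ⟨hφ', ?_⟩
    rw [hcov φ] at hEig
    have ha2 : (a:ℝ)^2 ≠ 0 := pow_ne_zero _ ha
    have : U (trimmedCov g α X φ) = U (lam • φ) := by
      apply smul_right_injective H ha2
      show a ^ 2 • U ((trimmedCov g α X) φ) = a ^ 2 • U (lam • φ)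
      rw [hEig, map_smul, smul_smul]
    exact U.injective this
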